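/- Let G = (V ∪ {r}, E) be a connected graph with nonnegative edge weights ŵ, and let T be the Kruskal auxiliary tree of (G,ŵ) with height function h (leaves are the vertices of G, and each internal vertex u_C created when components merge at weight threshold x gets h_{u_C} = x). Then Σ over edges (u,u') of T with r not in the subtree below u' of (h_u - h_{u'}) equals the minimum spanning tree weight OPT(G, ŵ). -/

import Mathlib

/-- `a` and `b` are connected using the (oriented representatives of) edges in `F`. -/
def EdgeConn {U : Type*} (F : Finset (U × U)) (a b : U) : Prop :=
  Relation.ReflTransGen (fun x y => (x, y) ∈ F ∨ (y, x) ∈ F) a b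

/-- `F` is the edge set of a spanning tree of the subgraph of `(U, Es)` induced
by the vertex set `X`. -/
def IsSpanningTree {U : Type*} (Es : Finset (U × U)) (X : Finset U)
    (F : Finset (U × U)) : Prop :=
  F ⊆ Es ∧ (∀ e ∈ F, e.1 ∈ X ∧ e.2 ∈ X) ∧
    (∀ a ∈ X, ∀ b ∈ X, EdgeConn F a b) ∧ F.card + 1 = X.card

/-- Minimum weight of a spanning tree of the induced subgraph on `X`. -/
noncomputable def OPT {U : Type*} (Es : Finset (U × U)) (X : Finset U)
    (w : U × U → ℝ) : ℝ :=
  sInf {t | ∃ F, IsSpanningTree Es X F ∧ t = ∑ e ∈ F, w e}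
/-- `a` and `b` are connected using edges of weight at most `x`. -/
def ConnBelow {U : Type*} (Es : Finset (U × U)) (wh : U × U → ℝ) (x : ℝ)
    (a b : U) : Prop :=
  Relation.ReflTransGen
    (fun p q => ((p, q) ∈ Es ∧ wh (p, q) ≤ x) ∨ ((q, p) ∈ Es ∧ wh (q, p) ≤ x)) a b

open Classical in
/-- The connected component of `a` in the subgraph of edges of weight at most `x`. -/
noncomputable def compAt {U : Type*} [Fintype U] (Es : Finset (U × U))
    (wh : U × U → ℝ) (x : ℝ) (a : U) : Finset U :=
  Finset.univ.filter (ConnBelow Es wh x a)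

/-- `m` is a descendant of `n` (possibly `m = n`) in the rooted tree with
parent function `par`. -/
def IsDesc {N : Type*} (par : N → N) (m n : N) : Prop := ∃ k, par^[k] m = n

open Classical in
/-- The set of graph vertices whose leaves lie in the subtree below `n`. -/
noncomputable def leavesBelow {U N : Type*} [Fintype U] (par : N → N)
    (lf : U → N) (n : N) : Finset U :=
  Finset.univ.filter (fun v => IsDesc par (lf v) n)

open Finset
set_option linter.unusedSectionVars false

section Basics
variable {U : Type*} [Fintype U] [DecidableEq U]

lemma edgeConn_refl (F : Finset (U × U)) (a : U) : EdgeConn F a a := .refl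

lemma edgeConn_symm {F : Finset (U × U)} {a b : U} (hab : EdgeConn F a b) : EdgeConn F b a :=
  (@Relation.ReflTransGen.stdSymm _ _ ⟨fun _ _ hxy => hxy.symm⟩).symm _ _ hab

lemma edgeConn_trans {F : Finset (U × U)} {a b c : U} (hab : EdgeConn F a b)
    (hbc : EdgeConn F b c) : EdgeConn F a c := hab.trans hbc

lemma edgeConn_mono {F F' : Finset (U × U)} (hFF : F ⊆ F') {a b : U} (hab : EdgeConn F a b) :
    EdgeConn F' a b :=
  Relation.ReflTransGen.mono (fun _ _ hxy => hxy.imp (fun hx => hFF hx) (fun hx => hFF hx)) _ _ hab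

lemma edgeConn_single {F : Finset (U × U)} {a b : U} (hab : (a, b) ∈ F ∨ (b, a) ∈ F) :
    EdgeConn F a b := Relation.ReflTransGen.single hab

lemma connBelow_symm {Es : Finset (U × U)} {wh : U × U → ℝ} {x : ℝ} {a b : U}
    (hab : ConnBelow Es wh x a b) : ConnBelow Es wh x b a :=
  (@Relation.ReflTransGen.stdSymm _ _ ⟨fun _ _ hxy => hxy.symm⟩).symm _ _ hab

lemma mem_compAt_self (Es : Finset (U × U)) (wh : U × U → ℝ) (x : ℝ) (a : U) :
    a ∈ compAt Es wh x a := by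
  simp [compAt]; exact .refl

lemma connBelow_of_mem_compAt {Es : Finset (U × U)} {wh : U × U → ℝ} {x : ℝ} {a b : U}
    (hb : b ∈ compAt Es wh x a) : ConnBelow Es wh x a b := by
  simpa [compAt] using hb

lemma mem_compAt_of_connBelow {Es : Finset (U × U)} {wh : U × U → ℝ} {x : ℝ} {a b : U}
    (hb : ConnBelow Es wh x a b) : b ∈ compAt Es wh x a := by
  simpa [compAt] using hb

lemma compAt_eq_of_mem {Es : Finset (U × U)} {wh : U × U → ℝ} {x : ℝ} {a b : U}
    (hb : b ∈ compAt Es wh x a) : compAt Es wh x a = compAt Es wh x b := by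
  have hab := connBelow_of_mem_compAt hb
  ext c
  simp only [compAt, mem_filter, mem_univ, true_and]
  exact ⟨fun hc => (connBelow_symm hab).trans hc, fun hc => hab.trans hc⟩

open Classical in
noncomputable def compF (F : Finset (U × U)) (a : U) : Finset U :=
  univ.filter (EdgeConn F a)

noncomputable def ncomp (F : Finset (U × U)) : ℕ := (univ.image (compF F)).card

lemma mem_compF_self (F : Finset (U × U)) (a : U) : a ∈ compF F a := by
  simp [compF]; exact .refl

lemma edgeConn_of_mem_compF {F : Finset (U × U)} {a b : U} (hb : b ∈ compF F a) :
    EdgeConn F a b := by simpa [compF] using hb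

lemma compF_eq_of_edgeConn {F : Finset (U × U)} {a b : U} (hab : EdgeConn F a b) :
    compF F a = compF F b := by
  ext c
  simp only [compF, mem_filter, mem_univ, true_and]
  exact ⟨fun hc => (edgeConn_symm hab).trans hc, fun hc => hab.trans hc⟩

lemma card_image_le_of_factor {β γ : Type*} [DecidableEq β] [DecidableEq γ]
    (f : U → β) (g : U → γ) (hfg : ∀ a b, g a = g b → f a = f b) :
    (univ.image f).card ≤ (univ.image g).card := by
  classical
  cases isEmpty_or_nonempty U with
  | inl hU => simp [Finset.univ_eq_empty]
  | inr hU =>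
    apply Finset.card_le_card_of_surjOn
      (fun c => if hc : ∃ a : U, g a = c then f hc.choose else f (Classical.arbitrary U))
    intro z hz
    simp only [coe_image, Set.mem_image, mem_coe, mem_univ, true_and, Set.image_univ,
      Set.mem_range] at hz ⊢
    obtain ⟨a, ha⟩ := hz
    refine ⟨g a, ⟨a, rfl⟩, ?_⟩
    have hc : ∃ a' : U, g a' = g a := ⟨a, rfl⟩
    simp only [hc, dif_pos]
    exact (hfg _ _ hc.choose_spec).trans ha

lemma edgeConn_insert_cases {F : Finset (U × U)} {e : U × U} {a b : U}
    (h : EdgeConn (insert e F) a b) :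
    EdgeConn F a b ∨ ((EdgeConn F a e.1 ∨ EdgeConn F a e.2) ∧
      (EdgeConn F b e.1 ∨ EdgeConn F b e.2)) := by
  induction h with
  | refl => exact Or.inl .refl
  | @tail c b hac hcb ih =>
    have step : ((c, b) = e ∨ (c, b) ∈ F) ∨ ((b, c) = e ∨ (b, c) ∈ F) := by
      rcases hcb with h1 | h1
      · exact Or.inl (Finset.mem_insert.1 h1)
      · exact Or.inr (Finset.mem_insert.1 h1)
    rcases step with (he | hF) | (he | hF)
    · -- (c,b) = e : c = e.1, b = e.2
      have hc1 : c = e.1 := by rw [← he]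
      have hb2 : b = e.2 := by rw [← he]
      subst hc1; subst hb2
      rcases ih with ih | ⟨iha, _⟩
      · exact Or.inr ⟨Or.inl ih, Or.inr .refl⟩
      · exact Or.inr ⟨iha, Or.inr .refl⟩
    · rcases ih with ih | ⟨iha, ihc⟩
      · exact Or.inl (ih.tail (Or.inl hF))
      · refine Or.inr ⟨iha, ?_⟩
        have hbc : EdgeConn F b c := edgeConn_single (Or.inr hF)
        exact ihc.imp (fun h' => hbc.trans h') (fun h' => hbc.trans h')
    · have hc2 : c = e.2 := by rw [← he]
      have hb1 : b = e.1 := by rw [← he]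
      subst hc2; subst hb1
      rcases ih with ih | ⟨iha, _⟩
      · exact Or.inr ⟨Or.inr ih, Or.inl .refl⟩
      · exact Or.inr ⟨iha, Or.inl .refl⟩
    · rcases ih with ih | ⟨iha, ihc⟩
      · exact Or.inl (ih.tail (Or.inr hF))
      · refine Or.inr ⟨iha, ?_⟩
        have hbc : EdgeConn F b c := edgeConn_single (Or.inl hF)
        exact ihc.imp (fun h' => hbc.trans h') (fun h' => hbc.trans h')

lemma ncomp_le_insert (F : Finset (U × U)) (e : U × U) :
    ncomp F ≤ ncomp (insert e F) + 1 := by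
  classical
  set f := compF F with hf
  set ψ : U → Finset U := fun a =>
    if EdgeConn F a e.1 ∨ EdgeConn F a e.2 then f e.1 else f a with hψ
  have step1 : univ.image f ⊆ insert (f e.2) (univ.image ψ) := by
    intro S hS
    obtain ⟨a, _, ha⟩ := Finset.mem_image.1 hS
    by_cases hc : EdgeConn F a e.1 ∨ EdgeConn F a e.2
    · rcases hc with hc1 | hc2
      · refine Finset.mem_insert_of_mem (Finset.mem_image.2 ⟨a, mem_univ a, ?_⟩)
        rw [hψ]; simp only [if_pos (Or.inl hc1)]
        rw [← ha, hf]; exact (compF_eq_of_edgeConn hc1).symm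
      · by_cases hc1 : EdgeConn F a e.1
        · refine Finset.mem_insert_of_mem (Finset.mem_image.2 ⟨a, mem_univ a, ?_⟩)
          rw [hψ]; simp only [if_pos (Or.inl hc1)]
          rw [← ha, hf]; exact (compF_eq_of_edgeConn hc1).symm
        · refine Finset.mem_insert.2 (Or.inl ?_)
          rw [← ha, hf]; exact compF_eq_of_edgeConn hc2
    · refine Finset.mem_insert_of_mem (Finset.mem_image.2 ⟨a, mem_univ a, ?_⟩)
      rw [hψ]; simp only [if_neg hc]; exact ha
  have step2 : (univ.image ψ).card ≤ ncomp (insert e F) := by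
    apply card_image_le_of_factor
    intro a b hab
    have hconn : EdgeConn (insert e F) a b := by
      have : b ∈ compF (insert e F) a := by rw [hab]; exact mem_compF_self _ _
      exact edgeConn_of_mem_compF this
    rcases edgeConn_insert_cases hconn with hab' | ⟨ha', hb'⟩
    · rw [hψ]
      by_cases hc : EdgeConn F a e.1 ∨ EdgeConn F a e.2
      · have hc' : EdgeConn F b e.1 ∨ EdgeConn F b e.2 :=
          hc.imp (fun h' => (edgeConn_symm hab').trans h') (fun h' => (edgeConn_symm hab').trans h')
        simp only [if_pos hc, if_pos hc']
      · have hc' : ¬ (EdgeConn F b e.1 ∨ EdgeConn F b e.2) := by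
          intro hc'
          exact hc (hc'.imp (fun h' => hab'.trans h') (fun h' => hab'.trans h'))
        simp only [if_neg hc, if_neg hc', hf]
        exact compF_eq_of_edgeConn hab'
    · rw [hψ]; simp only [if_pos ha', if_pos hb']
  calc ncomp F ≤ (insert (f e.2) (univ.image ψ)).card := Finset.card_le_card step1
    _ ≤ (univ.image ψ).card + 1 := Finset.card_insert_le _ _
    _ ≤ ncomp (insert e F) + 1 := by omega

lemma ncomp_le_union (H G : Finset (U × U)) : ncomp H ≤ ncomp (H ∪ G) + G.card := by
  classical
  induction G using Finset.induction_on with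
  | empty => simp
  | @insert a G ha ih =>
    have h1 := ncomp_le_insert (H ∪ G) a
    have h2 : H ∪ insert a G = insert a (H ∪ G) := Finset.union_insert a H G
    rw [h2, Finset.card_insert_of_notMem ha]
    omega

lemma ncomp_eq_one [Nonempty U] {F : Finset (U × U)} (hF : ∀ a b : U, EdgeConn F a b) :
    ncomp F = 1 := by
  have himg : univ.image (compF F) = {(univ : Finset U)} := by
    apply Finset.eq_singleton_iff_nonempty_unique_mem.2
    constructor
    · exact ⟨compF F (Classical.arbitrary U), Finset.mem_image.2 ⟨_, mem_univ _, rfl⟩⟩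
    · intro S hS
      obtain ⟨a, _, ha⟩ := Finset.mem_image.1 hS
      rw [← ha]
      ext b; simp only [compF, mem_filter, mem_univ, true_and, iff_true]
      exact hF a b
  rw [ncomp, himg, Finset.card_singleton]

lemma card_comps_le {Es : Finset (U × U)} {wh : U × U → ℝ} {x : ℝ} {F : Finset (U × U)}
    (hFE : F ⊆ Es) (hw : ∀ e ∈ F, wh e ≤ x) :
    (univ.image (compAt Es wh x)).card ≤ ncomp F := by
  apply card_image_le_of_factor
  intro a b hab
  have hconn : EdgeConn F a b := by
    have : b ∈ compF F a := by rw [hab]; exact mem_compF_self _ _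
    exact edgeConn_of_mem_compF this
  have hcb : ConnBelow Es wh x a b := by
    refine Relation.ReflTransGen.mono ?_ _ _ hconn
    rintro p q (hpq | hqp)
    · exact Or.inl ⟨hFE hpq, hw _ hpq⟩
    · exact Or.inr ⟨hFE hqp, hw _ hqp⟩
  exact compAt_eq_of_mem (mem_compAt_of_connBelow hcb)

lemma crossing_count [Nonempty U] {Es : Finset (U × U)} {wh : U × U → ℝ} (x : ℝ)
    {F : Finset (U × U)} (hFE : F ⊆ Es) (hconn : ∀ a b : U, EdgeConn F a b) :
    (univ.image (compAt Es wh x)).card ≤ (F.filter (fun e => ¬ wh e ≤ x)).card + 1 := by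
  classical
  have h1 : (univ.image (compAt Es wh x)).card ≤ ncomp (F.filter (fun e => wh e ≤ x)) :=
    card_comps_le (Finset.Subset.trans (Finset.filter_subset _ _) hFE)
      (fun e he => (Finset.mem_filter.1 he).2)
  have h2 : ncomp (F.filter (fun e => wh e ≤ x)) ≤
      ncomp ((F.filter (fun e => wh e ≤ x)) ∪ (F.filter (fun e => ¬ wh e ≤ x)))
        + (F.filter (fun e => ¬ wh e ≤ x)).card := ncomp_le_union _ _
  rw [Finset.filter_union_filter_not_eq] at h2
  rw [ncomp_eq_one hconn] at h2
  omega

end Basics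
section Tree
open Classical
variable {U N : Type*} [Fintype U] [DecidableEq U] [Fintype N] [DecidableEq N]

structure KTree (Es : Finset (U × U)) (wh : U × U → ℝ) (par : N → N) (root : N)
    (h : N → ℝ) (lf : U → N) : Prop where
  hwnn : ∀ e, 0 ≤ wh e
  hroot : par root = root
  hfix : ∀ n, par n = n → n = root
  hwf : ∀ n, IsDesc par n root
  hinj : Function.Injective lf
  hleaf1 : ∀ v : U, ∀ m, par m = lf v → m = lf v
  hleaf2 : ∀ n : N, (∀ m, par m = n → m = n) → ∃ v, lf v = n
  hh0 : ∀ v, h (lf v) = 0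
  hmono : ∀ m, m ≠ root → h m < h (par m)
  hcomp : ∀ n : N, ∀ a ∈ leavesBelow par lf n,
    leavesBelow par lf n = compAt Es wh (h n) a
  hmax : ∀ m, m ≠ root → ∀ x, h m ≤ x → x < h (par m) →
    ∀ a ∈ leavesBelow par lf m, leavesBelow par lf m = compAt Es wh x a
  hnew : ∀ n : N, (∃ m, m ≠ n ∧ par m = n) → ∀ x, x < h n →
    ∃ a ∈ leavesBelow par lf n, leavesBelow par lf n ≠ compAt Es wh x a
  hrootall : leavesBelow par lf root = Finset.univ

lemma isDesc_refl (par : N → N) (n : N) : IsDesc par n n := ⟨0, rfl⟩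

lemma isDesc_par (par : N → N) (m : N) : IsDesc par m (par m) :=
  ⟨1, Function.iterate_one par ▸ rfl⟩

lemma isDesc_trans {par : N → N} {a b c : N} (hab : IsDesc par a b) (hbc : IsDesc par b c) :
    IsDesc par a c := by
  obtain ⟨k, hk⟩ := hab; obtain ⟨l, hl⟩ := hbc
  exact ⟨l + k, by rw [Function.iterate_add_apply, hk, hl]⟩

namespace KTree
variable {Es : Finset (U × U)} {wh : U × U → ℝ} {par : N → N} {root : N}
  {h : N → ℝ} {lf : U → N} (K : KTree Es wh par root h lf)
include K

lemma h_le_par (t : N) : h t ≤ h (par t) := by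
  by_cases ht : t = root
  · subst ht; rw [K.hroot]
  · exact le_of_lt (K.hmono t ht)

lemma h_le_iterate (k : ℕ) (m : N) : h m ≤ h (par^[k] m) := by
  induction k with
  | zero => exact le_refl _
  | succ k ih =>
    rw [Function.iterate_succ_apply']
    exact ih.trans (K.h_le_par _)

lemma h_le_of_desc {m n : N} (hd : IsDesc par m n) : h m ≤ h n := by
  obtain ⟨k, hk⟩ := hd; rw [← hk]; exact K.h_le_iterate k m

lemma iterate_root (k : ℕ) : par^[k] root = root := by
  induction k with
  | zero => rfl
  | succ k ih => rw [Function.iterate_succ_apply', ih, K.hroot]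

lemma exists_leaf_below (n : N) : ∃ v, IsDesc par (lf v) n := by
  obtain ⟨m, hm, hmin⟩ := Finset.exists_min_image
    (Finset.univ.filter (fun m => IsDesc par m n)) h
    ⟨n, by simp [isDesc_refl]⟩
  rw [Finset.mem_filter] at hm
  have hleaf : ∀ p, par p = m → p = m := by
    intro p hp
    by_contra hpm
    have hpr : p ≠ root := by
      intro hr; subst hr; rw [K.hroot] at hp; exact hpm hp
    have h1 : h p < h m := by rw [← hp]; exact K.hmono p hpr
    have h2 : IsDesc par p n := isDesc_trans (hp ▸ isDesc_par par p) hm.2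
    have := hmin p (Finset.mem_filter.2 ⟨Finset.mem_univ _, h2⟩)
    linarith
  obtain ⟨v, hv⟩ := K.hleaf2 m hleaf
  exact ⟨v, hv ▸ hm.2⟩

lemma h_nonneg (n : N) : 0 ≤ h n := by
  obtain ⟨v, hv⟩ := K.exists_leaf_below n
  have := K.h_le_of_desc hv
  rw [K.hh0] at this; exact this

lemma h_le_root (n : N) : h n ≤ h root := K.h_le_of_desc (K.hwf n)

lemma desc_total {p a b : N} (hpa : IsDesc par p a) (hpb : IsDesc par p b) :
    IsDesc par a b ∨ IsDesc par b a := by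
  obtain ⟨i, hi⟩ := hpa; obtain ⟨j, hj⟩ := hpb
  rcases le_total i j with hij | hij
  · left
    refine ⟨j - i, ?_⟩
    rw [← hi, ← Function.iterate_add_apply]
    rw [show j - i + i = j by omega, hj]
  · right
    refine ⟨i - j, ?_⟩
    rw [← hj, ← Function.iterate_add_apply]
    rw [show i - j + j = i by omega, hi]

lemma desc_step {m n : N} (hd : IsDesc par m n) (hmn : m ≠ n) : IsDesc par (par m) n := by
  obtain ⟨k, hk⟩ := hd
  cases k with
  | zero => exact absurd hk hmn
  | succ k => exact ⟨k, by rw [← Function.iterate_succ_apply par k m, hk]⟩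

lemma ne_root_of_desc_ne {m n : N} (hd : IsDesc par m n) (hmn : m ≠ n) : m ≠ root := by
  intro hr; subst hr
  obtain ⟨k, hk⟩ := hd
  exact hmn ((K.iterate_root k ▸ hk).symm ▸ rfl)

lemma h_lt_of_desc_ne {m n : N} (hd : IsDesc par m n) (hmn : m ≠ n) : h m < h n := by
  have hmr := K.ne_root_of_desc_ne hd hmn
  have h1 : h m < h (par m) := K.hmono m hmr
  have h2 : h (par m) ≤ h n := K.h_le_of_desc (K.desc_step hd hmn)
  linarith

lemma desc_antisymm {a b : N} (hab : IsDesc par a b) (hba : IsDesc par b a) : a = b := by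
  by_contra hne
  have h1 := K.h_lt_of_desc_ne hab hne
  have h2 := K.h_lt_of_desc_ne hba (Ne.symm hne)
  linarith

lemma iterate_lf_eq {v : U} : ∀ k (x : N), par^[k] x = lf v → x = lf v := by
  intro k
  induction k with
  | zero => intro x hx; exact hx
  | succ k ih =>
    intro x hx
    rw [Function.iterate_succ_apply] at hx
    exact K.hleaf1 v x (ih (par x) hx)

lemma below_leaf (v : U) : leavesBelow par lf (lf v) = {v} := by
  ext w
  simp only [leavesBelow, Finset.mem_filter, Finset.mem_univ, true_and, Finset.mem_singleton]
  constructor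
  · rintro ⟨k, hk⟩
    exact K.hinj (K.iterate_lf_eq k _ hk)
  · rintro rfl; exact isDesc_refl par _

lemma mem_below {n : N} {v : U} : v ∈ leavesBelow par lf n ↔ IsDesc par (lf v) n := by
  simp [leavesBelow]

lemma below_mono {m n : N} (hd : IsDesc par m n) :
    leavesBelow par lf m ⊆ leavesBelow par lf n := by
  intro v hv
  rw [K.mem_below] at hv ⊢
  exact isDesc_trans hv hd

lemma below_nonempty (n : N) : (leavesBelow par lf n).Nonempty := by
  obtain ⟨v, hv⟩ := K.exists_leaf_below n
  exact ⟨v, K.mem_below.2 hv⟩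

lemma desc_through_child {p n : N} (hd : IsDesc par p n) (hpn : p ≠ n) :
    ∃ m, par m = n ∧ m ≠ n ∧ IsDesc par p m := by
  obtain ⟨k, hk⟩ := hd
  have hex : ∃ k, par^[k] p = n := ⟨k, hk⟩
  classical
  let k₀ := Nat.find hex
  have hk₀ : par^[k₀] p = n := Nat.find_spec hex
  have hk₀pos : 0 < k₀ := by
    rcases Nat.eq_zero_or_pos k₀ with h0 | h0
    · exfalso; apply hpn; rw [← hk₀, h0]; rfl
    · exact h0
  refine ⟨par^[k₀ - 1] p, ?_, ?_, ⟨k₀ - 1, rfl⟩⟩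
  · have h1 : k₀ - 1 + 1 = k₀ := by omega
    rw [← h1, Function.iterate_succ_apply'] at hk₀
    exact hk₀
  · intro heq
    exact absurd heq (Nat.find_min hex (by omega))

lemma child_ne_root {m n : N} (hp : par m = n) (hmn : m ≠ n) : m ≠ root := by
  intro hr; subst hr; rw [K.hroot] at hp; exact hmn hp

lemma desc_unique_child {n m₁ m₂ p : N} (h1 : par m₁ = n) (hn1 : m₁ ≠ n)
    (h2 : par m₂ = n) (hn2 : m₂ ≠ n) (hp1 : IsDesc par p m₁) (hp2 : IsDesc par p m₂) :
    m₁ = m₂ := by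
  by_contra hne
  rcases K.desc_total hp1 hp2 with hd | hd
  · have := K.h_le_of_desc (K.desc_step hd hne)
    rw [h1] at this
    have h3 : h m₂ < h n := h2 ▸ K.hmono m₂ (K.child_ne_root h2 hn2)
    linarith
  · have := K.h_le_of_desc (K.desc_step hd (Ne.symm hne))
    rw [h2] at this
    have h3 : h m₁ < h n := h1 ▸ K.hmono m₁ (K.child_ne_root h1 hn1)
    linarith

lemma below_eq_biUnion {n : N} (hint : ∃ m, m ≠ n ∧ par m = n) :
    leavesBelow par lf n =
      (Finset.univ.filter (fun m => par m = n ∧ m ≠ n)).biUnion (leavesBelow par lf) := by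
  ext v
  simp only [Finset.mem_biUnion, Finset.mem_filter, Finset.mem_univ, true_and]
  rw [K.mem_below]
  constructor
  · intro hv
    have hlfn : lf v ≠ n := by
      intro heq
      obtain ⟨m, hmn, hm⟩ := hint
      rw [← heq] at hm
      exact hmn (heq ▸ K.hleaf1 v m hm)
    obtain ⟨m, hm1, hm2, hm3⟩ := K.desc_through_child hv hlfn
    exact ⟨m, ⟨hm1, hm2⟩, K.mem_below.2 hm3⟩
  · rintro ⟨m, ⟨hm1, _⟩, hv⟩
    exact isDesc_trans (K.mem_below.1 hv) (hm1 ▸ isDesc_par par m)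

lemma two_children {n : N} (hint : ∃ m, m ≠ n ∧ par m = n) :
    ∃ m₁ m₂, par m₁ = n ∧ m₁ ≠ n ∧ par m₂ = n ∧ m₂ ≠ n ∧ m₁ ≠ m₂ := by
  obtain ⟨m, hmn, hm⟩ := hint
  by_contra hcon
  push_neg at hcon
  have honly : ∀ m', par m' = n → m' ≠ n → m' = m := by
    intro m' h1 h2
    by_contra hne
    exact hne (hcon m' m h1 h2 hm hmn)
  have hbel : leavesBelow par lf n = leavesBelow par lf m := by
    apply Finset.Subset.antisymm
    · intro v hv
      rw [K.below_eq_biUnion ⟨m, hmn, hm⟩] at hv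
      obtain ⟨m', hm', hv'⟩ := Finset.mem_biUnion.1 hv
      rw [Finset.mem_filter] at hm'
      rwa [honly m' hm'.2.1 hm'.2.2] at hv'
    · exact K.below_mono (hm ▸ isDesc_par par m)
  have hmr : m ≠ root := K.child_ne_root hm hmn
  have hlt : h m < h n := hm ▸ K.hmono m hmr
  obtain ⟨a, ha, hne⟩ := K.hnew n ⟨m, hmn, hm⟩ (h m) hlt
  apply hne
  rw [hbel] at ha ⊢
  exact K.hcomp m a ha

lemma crossing_ge {m : N} {a b : U} {e : U × U} (hmr : m ≠ root)
    (ha : a ∈ leavesBelow par lf m) (hb : b ∉ leavesBelow par lf m)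
    (he : e ∈ Es) (hab : e = (a, b) ∨ e = (b, a)) : h (par m) ≤ wh e := by
  by_contra hlt
  push_neg at hlt
  set x := max (wh e) (h m) with hx
  have hx1 : h m ≤ x := le_max_right _ _
  have hx2 : x < h (par m) := max_lt hlt (K.hmono m hmr)
  have hcomp := K.hmax m hmr x hx1 hx2 a ha
  apply hb
  rw [hcomp]
  apply mem_compAt_of_connBelow
  apply Relation.ReflTransGen.single
  rcases hab with rfl | rfl
  · exact Or.inl ⟨he, le_max_left _ _⟩
  · exact Or.inr ⟨he, le_max_left _ _⟩

lemma chain_cover (a : U) {x : ℝ} (hx0 : 0 ≤ x) (hxr : x < h root) :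
    ∃ m, m ≠ root ∧ a ∈ leavesBelow par lf m ∧ h m ≤ x ∧ x < h (par m) := by
  obtain ⟨m, hm, hmax'⟩ := Finset.exists_max_image
    (Finset.univ.filter (fun m => IsDesc par (lf a) m ∧ h m ≤ x)) h
    ⟨lf a, by simp [isDesc_refl, K.hh0, hx0]⟩
  rw [Finset.mem_filter] at hm
  have hmr : m ≠ root := by
    intro hr; subst hr; linarith [hm.2.2]
  refine ⟨m, hmr, K.mem_below.2 hm.2.1, hm.2.2, ?_⟩
  by_contra hpar
  push_neg at hpar
  have hparm : par m ∈ Finset.univ.filter (fun m => IsDesc par (lf a) m ∧ h m ≤ x) := by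
    refine Finset.mem_filter.2 ⟨Finset.mem_univ _, ?_, hpar⟩
    exact isDesc_trans hm.2.1 (isDesc_par par m)
  have := hmax' (par m) hparm
  linarith [K.hmono m hmr]

/-- number of connected components at threshold `x` equals number of active nodes. -/
lemma comps_eq_active {x : ℝ} (hx0 : 0 ≤ x) (hxr : x < h root) :
    (Finset.univ.image (compAt Es wh x)).card =
      (Finset.univ.filter (fun m => m ≠ root ∧ h m ≤ x ∧ x < h (par m))).card := by
  have himg : Finset.univ.image (compAt Es wh x) =
      (Finset.univ.filter (fun m => m ≠ root ∧ h m ≤ x ∧ x < h (par m))).image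
        (leavesBelow par lf) := by
    ext S
    simp only [Finset.mem_image, Finset.mem_univ, true_and, Finset.mem_filter]
    constructor
    · rintro ⟨a, rfl⟩
      obtain ⟨m, hmr, ha, hm1, hm2⟩ := K.chain_cover a hx0 hxr
      exact ⟨m, ⟨hmr, hm1, hm2⟩, (K.hmax m hmr x hm1 hm2 a ha)⟩
    · rintro ⟨m, ⟨hmr, hm1, hm2⟩, rfl⟩
      obtain ⟨a, ha⟩ := K.below_nonempty m
      exact ⟨a, (K.hmax m hmr x hm1 hm2 a ha).symm⟩
  rw [himg]
  apply Finset.card_image_of_injOn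
  intro m₁ hm₁ m₂ hm₂ heq
  simp only [Finset.coe_filter, Set.mem_setOf_eq, Finset.mem_univ, true_and] at hm₁ hm₂
  obtain ⟨v, hv⟩ := K.below_nonempty m₁
  have hv₂ : v ∈ leavesBelow par lf m₂ := heq ▸ hv
  rcases K.desc_total (K.mem_below.1 hv) (K.mem_below.1 hv₂) with hd | hd
  · by_contra hne
    have := K.h_le_of_desc (K.desc_step hd hne)
    linarith [hm₁.2.2, hm₂.2.1]
  · by_contra hne
    have := K.h_le_of_desc (K.desc_step hd (Ne.symm hne))
    linarith [hm₂.2.2, hm₁.2.1]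

end KTree
end Tree
section Construction
open Classical Finset
variable {U N : Type*} [Fintype U] [DecidableEq U] [Fintype N] [DecidableEq N]

lemma exists_crossing {α : Type*} {r : α → α → Prop} {T : Finset α} :
    ∀ {a b}, Relation.ReflTransGen r a b → a ∈ T → b ∉ T →
      ∃ p q, p ∈ T ∧ q ∉ T ∧ r p q := by
  intro a b hpath
  induction hpath with
  | refl => intro ha hb; exact absurd ha hb
  | @tail c d _ hcd ih =>
    intro ha hd
    by_cases hc : c ∈ T
    · exact ⟨c, d, hc, hd, hcd⟩
    · exact ih ha hc

open Classical in
noncomputable def subW (par : N → N) (h : N → ℝ) (n : N) : ℝ :=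
  ∑ m ∈ Finset.univ.filter (fun m => IsDesc par m n ∧ m ≠ n), (h (par m) - h m)

namespace KTree
variable {Es : Finset (U × U)} {wh : U × U → ℝ} {par : N → N} {root : N}
  {h : N → ℝ} {lf : U → N} (K : KTree Es wh par root h lf)
include K

lemma subW_decomp {n : N} (hint : ∃ m, m ≠ n ∧ par m = n) :
    subW par h n = ∑ m ∈ Finset.univ.filter (fun m => par m = n ∧ m ≠ n),
      ((h n - h m) + subW par h m) := by
  classical
  set J := Finset.univ.filter (fun m => par m = n ∧ m ≠ n) with hJ
  set D : N → Finset N := fun m => Finset.univ.filter (fun p => IsDesc par p m) with hD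
  have hPn : Finset.univ.filter (fun p => IsDesc par p n ∧ p ≠ n) = J.biUnion D := by
    ext p
    simp only [Finset.mem_filter, Finset.mem_univ, true_and, Finset.mem_biUnion, hD, hJ]
    constructor
    · rintro ⟨hd, hne⟩
      obtain ⟨m, hm1, hm2, hm3⟩ := K.desc_through_child hd hne
      exact ⟨m, ⟨hm1, hm2⟩, hm3⟩
    · rintro ⟨m, hm, hp⟩
      refine ⟨isDesc_trans hp (hm.1 ▸ isDesc_par par m), ?_⟩
      intro hpn
      subst hpn
      exact hm.2 (K.desc_antisymm (hm.1 ▸ isDesc_par par m) hp)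
  have hdisj : ∀ m₁ ∈ J, ∀ m₂ ∈ J, m₁ ≠ m₂ → Disjoint (D m₁) (D m₂) := by
    intro m₁ hm₁ m₂ hm₂ hne
    rw [hJ, Finset.mem_filter] at hm₁ hm₂
    rw [Finset.disjoint_left]
    intro p hp1 hp2
    rw [hD] at hp1 hp2; simp only [Finset.mem_filter] at hp1 hp2
    exact hne (K.desc_unique_child hm₁.2.1 hm₁.2.2 hm₂.2.1 hm₂.2.2 hp1.2 hp2.2)
  have hDm : ∀ m ∈ J, D m = insert m (Finset.univ.filter (fun p => IsDesc par p m ∧ p ≠ m)) := by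
    intro m _
    ext p
    simp only [hD, Finset.mem_filter, Finset.mem_univ, true_and, Finset.mem_insert]
    constructor
    · intro hd
      by_cases hpm : p = m
      · exact Or.inl hpm
      · exact Or.inr ⟨hd, hpm⟩
    · rintro (rfl | ⟨hd, _⟩)
      · exact isDesc_refl par p
      · exact hd
  rw [subW, hPn, Finset.sum_biUnion hdisj]
  apply Finset.sum_congr rfl
  intro m hm
  have hmJ := Finset.mem_filter.1 (hJ ▸ hm)
  rw [hDm m hm, Finset.sum_insert (by simp), hmJ.2.1, subW]
  try ring

lemma child_card_lt {n m : N} (hm : par m = n) (hmn : m ≠ n) :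
    (leavesBelow par lf m).card < (leavesBelow par lf n).card := by
  obtain ⟨m₁, m₂, h1, h1n, h2, h2n, h12⟩ := K.two_children ⟨m, hmn, hm⟩
  have hother : ∃ m', par m' = n ∧ m' ≠ n ∧ m' ≠ m := by
    by_cases he1 : m₁ = m
    · refine ⟨m₂, h2, h2n, ?_⟩
      intro hc; exact h12 (by rw [he1, hc])
    · exact ⟨m₁, h1, h1n, he1⟩
  obtain ⟨m', hm'1, hm'2, hm'3⟩ := hother
  obtain ⟨v, hv⟩ := K.below_nonempty m'
  apply Finset.card_lt_card
  constructor
  · exact K.below_mono (hm ▸ isDesc_par par m)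
  · intro hsub
    have hv2 : v ∈ leavesBelow par lf n := K.below_mono (hm'1 ▸ isDesc_par par m') hv
    have hv3 := hsub hv2
    exact hm'3 (K.desc_unique_child hm'1 hm'2 hm hmn (K.mem_below.1 hv) (K.mem_below.1 hv3))

lemma exists_spanning : ∀ (c : ℕ) (n : N), (leavesBelow par lf n).card ≤ c →
    ∃ F : Finset (U × U), F ⊆ Es ∧
      (∀ e ∈ F, e.1 ∈ leavesBelow par lf n ∧ e.2 ∈ leavesBelow par lf n) ∧
      (∀ a ∈ leavesBelow par lf n, ∀ b ∈ leavesBelow par lf n, EdgeConn F a b) ∧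
      F.card + 1 = (leavesBelow par lf n).card ∧
      ∑ e ∈ F, wh e = subW par h n - h n := by
  intro c
  induction c with
  | zero =>
    intro n hn
    exact absurd (Finset.card_pos.2 (K.below_nonempty n)) (by omega)
  | succ c ih =>
    intro n hn
    by_cases hint : ∃ m, m ≠ n ∧ par m = n
    · -- internal node
      classical
      set J := Finset.univ.filter (fun m => par m = n ∧ m ≠ n) with hJdef
      have hJmem : ∀ m, m ∈ J ↔ (par m = n ∧ m ≠ n) := by
        intro m; simp [hJdef]
      have hJne : J.Nonempty := by
        obtain ⟨m, hmn, hm⟩ := hint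
        exact ⟨m, (hJmem m).2 ⟨hm, hmn⟩⟩
      have hbelsub : ∀ m ∈ J, leavesBelow par lf m ⊆ leavesBelow par lf n := by
        intro m hm
        exact K.below_mono (((hJmem m).1 hm).1 ▸ isDesc_par par m)
      have hbiU : leavesBelow par lf n = J.biUnion (leavesBelow par lf) :=
        K.below_eq_biUnion hint
      have inner : ∀ j : ℕ, j + 1 ≤ J.card →
          ∃ Js : Finset N, Js ⊆ J ∧ Js.card = j + 1 ∧
          ∃ F : Finset (U × U), F ⊆ Es ∧
            (∀ e ∈ F, e.1 ∈ Js.biUnion (leavesBelow par lf) ∧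
              e.2 ∈ Js.biUnion (leavesBelow par lf)) ∧
            (∀ a ∈ Js.biUnion (leavesBelow par lf), ∀ b ∈ Js.biUnion (leavesBelow par lf),
              EdgeConn F a b) ∧
            F.card + 1 = (Js.biUnion (leavesBelow par lf)).card ∧
            ∑ e ∈ F, wh e = (∑ m ∈ Js, (subW par h m - h m)) + ((Js.card : ℝ) - 1) * h n := by
        intro j
        induction j with
        | zero =>
          intro _
          obtain ⟨m₁, hm₁⟩ := hJne
          have hcard : (leavesBelow par lf m₁).card ≤ c := by
            have h1 := K.child_card_lt ((hJmem m₁).1 hm₁).1 ((hJmem m₁).1 hm₁).2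
            omega
          obtain ⟨F, hF1, hF2, hF3, hF4, hF5⟩ := ih m₁ hcard
          refine ⟨{m₁}, by simpa using hm₁, by simp, F, hF1, ?_, ?_, ?_, ?_⟩
          · simpa using hF2
          · simpa using hF3
          · simpa using hF4
          · simp only [Finset.sum_singleton, Finset.card_singleton]
            rw [hF5]; push_cast; ring
        | succ j ihj =>
          intro hj1
          obtain ⟨Js, hJs, hJscard, F, hF1, hF2, hF3, hF4, hF5⟩ := ihj (by omega)
          set T := Js.biUnion (leavesBelow par lf) with hT
          have hTsub : T ⊆ leavesBelow par lf n := by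
            intro v hv
            obtain ⟨m, hm, hv'⟩ := Finset.mem_biUnion.1 hv
            exact hbelsub m (hJs hm) hv'
          have hJsne : Js.Nonempty := Finset.card_pos.1 (by omega)
          have hex : ∃ m₀, m₀ ∈ J ∧ m₀ ∉ Js := by
            by_contra hcon
            push_neg at hcon
            have hsub : J ⊆ Js := fun m hm => hcon m hm
            have := Finset.card_le_card hsub
            omega
          obtain ⟨m₀, hm₀J, hm₀Js⟩ := hex
          have hnotT : ∀ m', m' ∈ J → m' ∉ Js → ∀ w ∈ leavesBelow par lf m', w ∉ T := by
            intro m' hm'J hm'Js w hw hwT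
            obtain ⟨m'', hm'', hw'⟩ := Finset.mem_biUnion.1 hwT
            have heq := K.desc_unique_child ((hJmem m').1 hm'J).1 ((hJmem m').1 hm'J).2
              ((hJmem m'').1 (hJs hm'')).1 ((hJmem m'').1 (hJs hm'')).2
              (K.mem_below.1 hw) (K.mem_below.1 hw')
            exact hm'Js (heq ▸ hm'')
          obtain ⟨m₁, hm₁⟩ := hJsne
          obtain ⟨a, ha⟩ := K.below_nonempty m₁
          have haT : a ∈ T := Finset.mem_biUnion.2 ⟨m₁, hm₁, ha⟩
          obtain ⟨b₀, hb₀⟩ := K.below_nonempty m₀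
          have hb₀T : b₀ ∉ T := hnotT m₀ hm₀J hm₀Js b₀ hb₀
          have hconn : ConnBelow Es wh (h n) a b₀ := by
            have ha' : a ∈ leavesBelow par lf n := hTsub haT
            have hb' : b₀ ∈ leavesBelow par lf n := hbelsub m₀ hm₀J hb₀
            rw [K.hcomp n a ha'] at hb'
            exact connBelow_of_mem_compAt hb'
          obtain ⟨p, q, hpT, hqT, hstep⟩ := exists_crossing hconn haT hb₀T
          have hpn : p ∈ leavesBelow par lf n := hTsub hpT
          have hqn : q ∈ leavesBelow par lf n := by
            rw [K.hcomp n p hpn]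
            exact mem_compAt_of_connBelow (Relation.ReflTransGen.single hstep)
          have hqbi : q ∈ J.biUnion (leavesBelow par lf) := hbiU ▸ hqn
          obtain ⟨mq, hmqJ, hqmq⟩ := Finset.mem_biUnion.1 hqbi
          have hmqJs : mq ∉ Js := by
            intro hc
            exact hqT (Finset.mem_biUnion.2 ⟨mq, hc, hqmq⟩)
          have hmqnotT : ∀ w ∈ leavesBelow par lf mq, w ∉ T := hnotT mq hmqJ hmqJs
          have hpmq : p ∉ leavesBelow par lf mq := by
            intro hc
            exact hmqnotT p hc hpT
          obtain ⟨e, he, heor, hewle⟩ :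
              ∃ e, e ∈ Es ∧ (e = (q, p) ∨ e = (p, q)) ∧ wh e ≤ h n := by
            rcases hstep with ⟨h1, h2⟩ | ⟨h1, h2⟩
            · exact ⟨(p, q), h1, Or.inr rfl, h2⟩
            · exact ⟨(q, p), h1, Or.inl rfl, h2⟩
          have hwe : wh e = h n := by
            have h1 := K.crossing_ge (K.child_ne_root ((hJmem mq).1 hmqJ).1
              ((hJmem mq).1 hmqJ).2) hqmq hpmq he heor
            rw [((hJmem mq).1 hmqJ).1] at h1
            linarith
          have hcard : (leavesBelow par lf mq).card ≤ c := by
            have h1 := K.child_card_lt ((hJmem mq).1 hmqJ).1 ((hJmem mq).1 hmqJ).2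
            omega
          obtain ⟨Fq, hFq1, hFq2, hFq3, hFq4, hFq5⟩ := ih mq hcard
          have hTdisj : Disjoint T (leavesBelow par lf mq) := by
            rw [Finset.disjoint_right]
            intro w hw
            exact hmqnotT w hw
          have hFdisj : Disjoint F Fq := by
            rw [Finset.disjoint_left]
            intro e' he'F he'Fq
            exact (Finset.disjoint_left.1 hTdisj (hF2 e' he'F).1) (hFq2 e' he'Fq).1
          have heF : e ∉ F ∪ Fq := by
            intro hc
            rcases Finset.mem_union.1 hc with hc | hc
            · rcases heor with rfl | rfl
              · exact hqT (hF2 _ hc).1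
              · exact hqT (hF2 _ hc).2
            · rcases heor with rfl | rfl
              · exact hpmq (hFq2 _ hc).2
              · exact hpmq (hFq2 _ hc).1
          have hT'sub : T ⊆ (insert mq Js).biUnion (leavesBelow par lf) :=
            Finset.biUnion_subset_biUnion_of_subset_left _ (Finset.subset_insert _ _)
          have hmq'sub : leavesBelow par lf mq ⊆ (insert mq Js).biUnion (leavesBelow par lf) := by
            intro w hw; exact Finset.mem_biUnion.2 ⟨mq, Finset.mem_insert_self _ _, hw⟩
          refine ⟨insert mq Js, Finset.insert_subset hmqJ hJs,
            by rw [Finset.card_insert_of_notMem hmqJs, hJscard],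
            insert e (F ∪ Fq), ?_, ?_, ?_, ?_, ?_⟩
          · intro e' he'
            rcases Finset.mem_insert.1 he' with rfl | he'
            · exact he
            · rcases Finset.mem_union.1 he' with h' | h'
              · exact hF1 h'
              · exact hFq1 h'
          · intro e' he'
            rcases Finset.mem_insert.1 he' with rfl | he'
            · rcases heor with rfl | rfl
              · exact ⟨hmq'sub hqmq, hT'sub hpT⟩
              · exact ⟨hT'sub hpT, hmq'sub hqmq⟩
            · rcases Finset.mem_union.1 he' with h' | h'
              · exact ⟨hT'sub (hF2 _ h').1, hT'sub (hF2 _ h').2⟩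
              · exact ⟨hmq'sub (hFq2 _ h').1, hmq'sub (hFq2 _ h').2⟩
          · intro x hx y hy
            have hsub1 : F ⊆ insert e (F ∪ Fq) :=
              Finset.Subset.trans Finset.subset_union_left (Finset.subset_insert _ _)
            have hsub2 : Fq ⊆ insert e (F ∪ Fq) :=
              Finset.Subset.trans Finset.subset_union_right (Finset.subset_insert _ _)
            have hqp : EdgeConn (insert e (F ∪ Fq)) q p := by
              apply edgeConn_single
              rcases heor with rfl | rfl
              · exact Or.inl (Finset.mem_insert_self _ _)
              · exact Or.inr (Finset.mem_insert_self _ _)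
            have key : ∀ z ∈ (insert mq Js).biUnion (leavesBelow par lf),
                EdgeConn (insert e (F ∪ Fq)) z p := by
              intro z hz
              obtain ⟨m', hm', hz'⟩ := Finset.mem_biUnion.1 hz
              rcases Finset.mem_insert.1 hm' with rfl | hm'
              · exact (edgeConn_mono hsub2 (hFq3 z hz' q hqmq)).trans hqp
              · have hzT : z ∈ T := Finset.mem_biUnion.2 ⟨m', hm', hz'⟩
                exact edgeConn_mono hsub1 (hF3 z hzT p hpT)
            exact (key x hx).trans (edgeConn_symm (key y hy))
          · rw [Finset.card_insert_of_notMem heF, Finset.card_union_of_disjoint hFdisj,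
              Finset.biUnion_insert, Finset.card_union_of_disjoint hTdisj.symm]
            omega
          · rw [Finset.sum_insert heF, Finset.sum_union hFdisj, hF5, hFq5, hwe,
              Finset.sum_insert hmqJs, Finset.card_insert_of_notMem hmqJs, hJscard]
            push_cast
            ring
      have hJcard : 1 ≤ J.card := Finset.card_pos.2 hJne
      obtain ⟨Js, hJs, hJscard, F, hF1, hF2, hF3, hF4, hF5⟩ :=
        inner (J.card - 1) (by omega)
      have hJsJ : Js = J := Finset.eq_of_subset_of_card_le hJs (by omega)
      subst hJsJ
      refine ⟨F, hF1, ?_, ?_, ?_, ?_⟩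
      · rw [hbiU]; exact hF2
      · rw [hbiU]; exact hF3
      · rw [hbiU]; exact hF4
      · rw [hF5, K.subW_decomp hint]
        have hc : (J.card : ℝ) * h n = ∑ _m ∈ J, h n := by
          rw [Finset.sum_const, nsmul_eq_mul]
        have hsplit : ∑ m ∈ J, (h n - h m + subW par h m)
            = (∑ m ∈ J, (subW par h m - h m)) + (J.card : ℝ) * h n := by
          rw [hc, ← Finset.sum_add_distrib]
          exact Finset.sum_congr rfl (fun m _ => by ring)
        rw [hsplit]
        ring
    · -- leaf
      push_neg at hint
      have hlf : ∀ m, par m = n → m = n := by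
        intro m hm
        by_contra hne
        exact (hint m hne) hm
      obtain ⟨v, hv⟩ := K.hleaf2 n hlf
      subst hv
      refine ⟨∅, by simp, by simp, ?_, ?_, ?_⟩
      · intro a ha b hb
        rw [K.below_leaf, Finset.mem_singleton] at ha hb
        subst ha; subst hb
        exact edgeConn_refl _ _
      · rw [K.below_leaf]; simp
      · have hP : Finset.univ.filter (fun m => IsDesc par m (lf v) ∧ m ≠ lf v) = ∅ := by
          ext m
          simp only [Finset.mem_filter, Finset.mem_univ, true_and, Finset.notMem_empty,
            iff_false, not_and]
          rintro ⟨k, hk⟩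
          intro hne
          exact hne (K.iterate_lf_eq k m hk)
        rw [subW, hP, K.hh0]
        simp

end KTree
end Construction
section Thresh
open Finset

noncomputable def tfun (S : Finset ℝ) : ℕ → ℝ := fun i =>
  if hi : i < S.card then S.orderEmbOfFin rfl ⟨i, hi⟩ else 0

lemma tfun_mem (S : Finset ℝ) {i : ℕ} (hi : i < S.card) : tfun S i ∈ S := by
  rw [tfun, dif_pos hi]; exact Finset.orderEmbOfFin_mem _ _ _

lemma tfun_lt (S : Finset ℝ) {i j : ℕ} (hij : i < j) (hj : j < S.card) :
    tfun S i < tfun S j := by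
  have hi : i < S.card := lt_trans hij hj
  rw [tfun, tfun, dif_pos hi, dif_pos hj]
  exact (Finset.orderEmbOfFin S rfl).strictMono (by exact hij)

lemma tfun_mono (S : Finset ℝ) {i j : ℕ} (hij : i ≤ j) (hj : j < S.card) :
    tfun S i ≤ tfun S j := by
  rcases eq_or_lt_of_le hij with rfl | hij
  · exact le_refl _
  · exact le_of_lt (tfun_lt S hij hj)

lemma tfun_surj (S : Finset ℝ) {y : ℝ} (hy : y ∈ S) : ∃ i, i < S.card ∧ tfun S i = y := by
  have := Finset.range_orderEmbOfFin S (rfl : S.card = S.card)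
  have hy' : y ∈ Set.range (S.orderEmbOfFin rfl) := by rw [this]; exact hy
  obtain ⟨⟨i, hi⟩, hiy⟩ := hy'
  exact ⟨i, hi, by rw [tfun, dif_pos hi]; exact hiy⟩

lemma tfun_le_reflect (S : Finset ℝ) {i j : ℕ} (hi : i < S.card) (hj : j < S.card)
    (hle : tfun S i ≤ tfun S j) : i ≤ j := by
  by_contra hc
  push_neg at hc
  exact absurd (tfun_lt S hc hi) (by linarith)

lemma tfun_lt_reflect (S : Finset ℝ) {i j : ℕ} (hi : i < S.card)
    (hlt : tfun S i < tfun S j) : i < j := by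
  by_contra hc
  push_neg at hc
  exact absurd (tfun_mono S hc hi) (by linarith)

lemma tfun_tele (S : Finset ℝ) (j₁ j₂ : ℕ) :
    ∑ i ∈ Finset.Ico j₁ j₂, (tfun S (i + 1) - tfun S i) = tfun S j₂ - tfun S j₁ ∨ j₂ < j₁ := by
  rcases le_or_gt j₁ j₂ with hle | hlt
  · left
    rw [Finset.sum_Ico_eq_sum_range]
    have h1 := Finset.sum_range_sub (fun l => tfun S (j₁ + l)) (j₂ - j₁)
    calc ∑ i ∈ Finset.range (j₂ - j₁), (tfun S (j₁ + i + 1) - tfun S (j₁ + i))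
        = ∑ i ∈ Finset.range (j₂ - j₁), (tfun S (j₁ + (i + 1)) - tfun S (j₁ + i)) := by
          apply Finset.sum_congr rfl; intro i _; rw [show j₁ + i + 1 = j₁ + (i + 1) by omega]
      _ = tfun S (j₁ + (j₂ - j₁)) - tfun S (j₁ + 0) := h1
      _ = tfun S j₂ - tfun S j₁ := by rw [show j₁ + (j₂ - j₁) = j₂ by omega, Nat.add_zero]
  · right; exact hlt

lemma tfun_tele' (S : Finset ℝ) {j₁ j₂ : ℕ} (h12 : j₁ ≤ j₂) :
    ∑ i ∈ Finset.Ico j₁ j₂, (tfun S (i + 1) - tfun S i) = tfun S j₂ - tfun S j₁ := by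
  rcases tfun_tele S j₁ j₂ with he | hc
  · exact he
  · omega

open Classical in
lemma tfun_sum_interval (S : Finset ℝ) {a b : ℝ} (ha : a ∈ S) (hb : b ∈ S) (hab : a ≤ b) :
    ∑ i ∈ (Finset.range (S.card - 1)).filter (fun i => a ≤ tfun S i ∧ tfun S i < b),
      (tfun S (i + 1) - tfun S i) = b - a := by
  obtain ⟨ja, hja, hta⟩ := tfun_surj S ha
  obtain ⟨jb, hjb, htb⟩ := tfun_surj S hb
  have hjab : ja ≤ jb := tfun_le_reflect S hja hjb (by rw [hta, htb]; exact hab)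
  have hfilter : (Finset.range (S.card - 1)).filter (fun i => a ≤ tfun S i ∧ tfun S i < b)
      = Finset.Ico ja jb := by
    ext i
    simp only [Finset.mem_filter, Finset.mem_range, Finset.mem_Ico]
    constructor
    · rintro ⟨hiK, hai, hib⟩
      have hi : i < S.card := by omega
      constructor
      · exact tfun_le_reflect S hja hi (by rw [hta]; exact hai)
      · exact tfun_lt_reflect S hi (by rw [← htb] at hib; exact hib)
    · rintro ⟨h1, h2⟩
      have hi : i < S.card := by omega
      refine ⟨by omega, ?_, ?_⟩
      · rw [← hta]; exact tfun_mono S h1 hi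
      · rw [← htb]; exact tfun_lt S h2 hjb
  rw [hfilter, tfun_tele' S hjab, hta, htb]

end Thresh

section Lower
open Classical Finset
variable {U N : Type*} [Fintype U] [DecidableEq U] [Fintype N] [DecidableEq N]

namespace KTree
variable {Es : Finset (U × U)} {wh : U × U → ℝ} {par : N → N} {root : N}
  {h : N → ℝ} {lf : U → N} (K : KTree Es wh par root h lf)
include K

lemma nonemptyU : Nonempty U := by
  obtain ⟨v, _⟩ := K.exists_leaf_below root
  exact ⟨v⟩

lemma subW_root : subW par h root
    = ∑ m ∈ Finset.univ.filter (fun m => m ≠ root), (h (par m) - h m) := by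
  rw [subW]
  apply Finset.sum_congr
  · ext m
    simp only [Finset.mem_filter, Finset.mem_univ, true_and, and_iff_right_iff_imp]
    intro _
    exact K.hwf m
  · intros; rfl

lemma hS_mem_zero : (0 : ℝ) ∈ Finset.univ.image h := by
  obtain ⟨v, _⟩ := K.exists_leaf_below root
  exact Finset.mem_image.2 ⟨lf v, Finset.mem_univ _, K.hh0 v⟩

lemma lower_bound {F : Finset (U × U)} (hST : IsSpanningTree Es Finset.univ F) :
    subW par h root - h root ≤ ∑ e ∈ F, wh e := by
  classical
  haveI : Nonempty U := K.nonemptyU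
  obtain ⟨hFE, _hFin, hFconn', _hFcard⟩ := hST
  have hFconn : ∀ a b : U, EdgeConn F a b := fun a b =>
    hFconn' a (Finset.mem_univ a) b (Finset.mem_univ b)
  set S : Finset ℝ := Finset.univ.image h with hSdef
  set t : ℕ → ℝ := tfun S with htdef
  set KK : ℕ := S.card - 1 with hKK
  have hScard : 1 ≤ S.card := Finset.card_pos.2 ⟨0, K.hS_mem_zero⟩
  have hhmem : ∀ n : N, h n ∈ S := fun n => Finset.mem_image.2 ⟨n, Finset.mem_univ _, rfl⟩
  have hSpos : ∀ y ∈ S, (0:ℝ) ≤ y := by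
    intro y hy
    obtain ⟨n, _, rfl⟩ := Finset.mem_image.1 hy
    exact K.h_nonneg n
  have hSle : ∀ y ∈ S, y ≤ h root := by
    intro y hy
    obtain ⟨n, _, rfl⟩ := Finset.mem_image.1 hy
    exact K.h_le_root n
  have ht0 : t 0 = 0 := by
    apply le_antisymm
    · obtain ⟨i, hi, hti⟩ := tfun_surj S (K.hS_mem_zero)
      rw [← hti]
      exact tfun_mono S (by omega) hi
    · exact hSpos _ (tfun_mem S (by omega))
  have htK : t KK = h root := by
    apply le_antisymm
    · exact hSle _ (tfun_mem S (by omega))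
    · obtain ⟨i, hi, hti⟩ := tfun_surj S (hhmem root)
      rw [← hti]
      exact tfun_mono S (by omega) (by omega)
  have htpos : ∀ i, i < S.card → 0 ≤ t i := fun i hi => hSpos _ (tfun_mem S hi)
  -- step A : per-edge bound
  have hedge : ∀ e ∈ F,
      ∑ i ∈ (Finset.range KK).filter (fun i => t (i + 1) ≤ wh e), (t (i + 1) - t i)
        ≤ wh e := by
    intro e _
    by_cases hG : ((Finset.range KK).filter (fun i => t (i + 1) ≤ wh e)).Nonempty
    · set G := (Finset.range KK).filter (fun i => t (i + 1) ≤ wh e) with hGdef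
      set jm := G.max' hG with hjm
      have hjmG : jm ∈ G := G.max'_mem hG
      have hjmK : jm < KK := (Finset.mem_range.1 (Finset.mem_filter.1 hjmG).1)
      have hjmw : t (jm + 1) ≤ wh e := (Finset.mem_filter.1 hjmG).2
      have hGeq : G = Finset.range (jm + 1) := by
        ext i
        simp only [hGdef, Finset.mem_filter, Finset.mem_range]
        constructor
        · rintro ⟨hir, hw⟩
          have hle := Finset.le_max' G i (by
            rw [hGdef]; exact Finset.mem_filter.2 ⟨Finset.mem_range.2 hir, hw⟩)
          omega
        · intro hi
          refine ⟨by omega, ?_⟩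
          calc t (i + 1) ≤ t (jm + 1) := tfun_mono S (by omega) (by omega)
            _ ≤ wh e := hjmw
      rw [hGeq, Finset.range_eq_Ico, tfun_tele' S (by omega : 0 ≤ jm + 1), ← htdef, ht0]
      simpa using hjmw
    · rw [Finset.not_nonempty_iff_eq_empty.1 hG, Finset.sum_empty]
      exact K.hwnn e
  -- component constancy on [t i, t (i+1))
  have hcompconst : ∀ i, i < KK → ∀ y, t i ≤ y → y < t (i + 1) →
      ∀ a : U, compAt Es wh y a = compAt Es wh (t i) a := by
    intro i hi y hy1 hy2 a
    have hti0 : 0 ≤ t i := htpos i (by omega)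
    have htir : t i < h root := by
      rw [← htK]; exact tfun_lt S (by omega) (by omega)
    obtain ⟨m, hmr, ham, hm1, hm2⟩ := K.chain_cover a hti0 htir
    have hparm : t (i + 1) ≤ h (par m) := by
      obtain ⟨jp, hjp, htjp⟩ := tfun_surj S (hhmem (par m))
      have hlt : i < jp := tfun_lt_reflect S (by omega) (by rw [htjp, ← htdef]; exact hm2)
      rw [← htjp, htdef]
      exact tfun_mono S (by omega) hjp
    have e1 := K.hmax m hmr (t i) hm1 hm2 a ham
    have e2 := K.hmax m hmr y (le_trans hm1 hy1) (lt_of_lt_of_le hy2 hparm) a ham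
    rw [← e1, ← e2]
  -- step C : count bound
  have hcount : ∀ i, i < KK →
      ((Finset.univ.image (compAt Es wh (t i))).card : ℝ) - 1
        ≤ ((F.filter (fun e => t (i + 1) ≤ wh e)).card : ℝ) := by
    intro i hi
    set Fsm := F.filter (fun e => wh e < t (i + 1)) with hFsm
    set xs : ℝ := (insert (t i) (Fsm.image wh)).max' (Finset.insert_nonempty _ _) with hxs
    have hx1 : t i ≤ xs := Finset.le_max' _ _ (Finset.mem_insert_self _ _)
    have hx2 : xs < t (i + 1) := by
      rw [hxs]
      refine (Finset.max'_lt_iff _ _).2 ?_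
      intro b hb
      rcases Finset.mem_insert.1 hb with rfl | hb
      · exact tfun_lt S (by omega) (by omega)
      · obtain ⟨e, he, rfl⟩ := Finset.mem_image.1 hb
        exact (Finset.mem_filter.1 he).2
    have hcc := crossing_count (Es := Es) (wh := wh) xs hFE hFconn
    have hcompeq : Finset.univ.image (compAt Es wh xs)
        = Finset.univ.image (compAt Es wh (t i)) := by
      have hfun : compAt Es wh xs = compAt Es wh (t i) := by
        funext a
        exact hcompconst i hi xs hx1 hx2 a
      rw [hfun]
    rw [hcompeq] at hcc
    have hsub : F.filter (fun e => ¬ wh e ≤ xs) ⊆ F.filter (fun e => t (i + 1) ≤ wh e) := by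
      intro e he
      rw [Finset.mem_filter] at he ⊢
      refine ⟨he.1, ?_⟩
      by_contra hc
      push_neg at hc
      apply he.2
      apply Finset.le_max'
      exact Finset.mem_insert_of_mem (Finset.mem_image.2 ⟨e, Finset.mem_filter.2 ⟨he.1, hc⟩, rfl⟩)
    have hcard2 := Finset.card_le_card hsub
    have hnat : (Finset.univ.image (compAt Es wh (t i))).card
        ≤ (F.filter (fun e => t (i + 1) ≤ wh e)).card + 1 := by omega
    have hcast : ((Finset.univ.image (compAt Es wh (t i))).card : ℝ)
        ≤ ((F.filter (fun e => t (i + 1) ≤ wh e)).card : ℝ) + 1 := by exact_mod_cast hnat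
    linarith
  -- step B : swap double sum
  have hswap : ∑ e ∈ F, ∑ i ∈ (Finset.range KK).filter (fun i => t (i + 1) ≤ wh e),
        (t (i + 1) - t i)
      = ∑ i ∈ Finset.range KK,
          ((F.filter (fun e => t (i + 1) ≤ wh e)).card : ℝ) * (t (i + 1) - t i) := by
    calc ∑ e ∈ F, ∑ i ∈ (Finset.range KK).filter (fun i => t (i + 1) ≤ wh e), (t (i + 1) - t i)
        = ∑ e ∈ F, ∑ i ∈ Finset.range KK,
            if t (i + 1) ≤ wh e then t (i + 1) - t i else 0 :=
          Finset.sum_congr rfl (fun e _ => Finset.sum_filter _ _)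
      _ = ∑ i ∈ Finset.range KK, ∑ e ∈ F,
            if t (i + 1) ≤ wh e then t (i + 1) - t i else 0 := Finset.sum_comm
      _ = _ := by
          refine Finset.sum_congr rfl (fun i _ => ?_)
          rw [← Finset.sum_filter, Finset.sum_const, nsmul_eq_mul]
  -- step D : the exact value
  have hD2 : ∑ i ∈ Finset.range KK, (t (i + 1) - t i) = h root := by
    rw [Finset.range_eq_Ico, tfun_tele' S (by omega : 0 ≤ KK), ← htdef, ht0, htK]
    ring
  have hD1 : ∑ i ∈ Finset.range KK,
        ((Finset.univ.image (compAt Es wh (t i))).card : ℝ) * (t (i + 1) - t i)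
      = subW par h root := by
    have hact : ∀ i ∈ Finset.range KK,
        ((Finset.univ.image (compAt Es wh (t i))).card : ℝ) * (t (i + 1) - t i)
          = ∑ _m ∈ Finset.univ.filter
              (fun m => m ≠ root ∧ h m ≤ t i ∧ t i < h (par m)), (t (i + 1) - t i) := by
      intro i hi
      rw [Finset.mem_range] at hi
      rw [K.comps_eq_active (htpos i (by omega))
        (by rw [← htK]; exact tfun_lt S (by omega) (by omega))]
      rw [Finset.sum_const, nsmul_eq_mul]
    rw [Finset.sum_congr rfl hact]
    have hper : ∀ m : N, ∑ i ∈ Finset.range KK,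
        (if m ≠ root ∧ h m ≤ t i ∧ t i < h (par m) then t (i + 1) - t i else 0)
          = if m ≠ root then h (par m) - h m else 0 := by
      intro m
      by_cases hm : m ≠ root
      · rw [if_pos hm]
        have hcondeq : ∀ i ∈ Finset.range KK,
            (if m ≠ root ∧ h m ≤ t i ∧ t i < h (par m) then t (i + 1) - t i else 0)
              = (if h m ≤ t i ∧ t i < h (par m) then t (i + 1) - t i else 0) := by
          intro i _
          by_cases hc : h m ≤ t i ∧ t i < h (par m)
          · rw [if_pos ⟨hm, hc⟩, if_pos hc]
          · rw [if_neg (fun hc' => hc hc'.2), if_neg hc]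
        rw [Finset.sum_congr rfl hcondeq, ← Finset.sum_filter]
        rw [htdef, hKK]
        exact tfun_sum_interval S (hhmem m) (hhmem (par m)) (K.h_le_par m)
      · rw [if_neg hm]
        exact Finset.sum_eq_zero (fun i _ => if_neg (fun hc => hm hc.1))
    calc ∑ i ∈ Finset.range KK, ∑ _m ∈ Finset.univ.filter
            (fun m => m ≠ root ∧ h m ≤ t i ∧ t i < h (par m)), (t (i + 1) - t i)
        = ∑ i ∈ Finset.range KK, ∑ m ∈ Finset.univ,
            (if m ≠ root ∧ h m ≤ t i ∧ t i < h (par m) then t (i + 1) - t i else 0) :=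
          Finset.sum_congr rfl (fun i _ => Finset.sum_filter _ _)
      _ = ∑ m ∈ Finset.univ, ∑ i ∈ Finset.range KK,
            (if m ≠ root ∧ h m ≤ t i ∧ t i < h (par m) then t (i + 1) - t i else 0) :=
          Finset.sum_comm
      _ = ∑ m ∈ Finset.univ, (if m ≠ root then h (par m) - h m else 0) :=
          Finset.sum_congr rfl (fun m _ => hper m)
      _ = ∑ m ∈ Finset.univ.filter (fun m => m ≠ root), (h (par m) - h m) :=
          (Finset.sum_filter _ _).symm
      _ = subW par h root := (K.subW_root).symm
  have hfinal : ∑ i ∈ Finset.range KK,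
      (((Finset.univ.image (compAt Es wh (t i))).card : ℝ) - 1) * (t (i + 1) - t i)
        = subW par h root - h root := by
    have hsplit : ∀ i ∈ Finset.range KK,
        (((Finset.univ.image (compAt Es wh (t i))).card : ℝ) - 1) * (t (i + 1) - t i)
          = ((Finset.univ.image (compAt Es wh (t i))).card : ℝ) * (t (i + 1) - t i)
            - (t (i + 1) - t i) := by
      intro i _; ring
    rw [Finset.sum_congr rfl hsplit, Finset.sum_sub_distrib, hD1, hD2]
  calc subW par h root - h root
      = ∑ i ∈ Finset.range KK,
          (((Finset.univ.image (compAt Es wh (t i))).card : ℝ) - 1) * (t (i + 1) - t i) :=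
        hfinal.symm
    _ ≤ ∑ i ∈ Finset.range KK,
          ((F.filter (fun e => t (i + 1) ≤ wh e)).card : ℝ) * (t (i + 1) - t i) := by
        apply Finset.sum_le_sum
        intro i hi
        rw [Finset.mem_range] at hi
        apply mul_le_mul_of_nonneg_right (hcount i hi)
        have := tfun_mono S (by omega : i ≤ i + 1) (by omega : i + 1 < S.card)
        rw [← htdef] at this
        linarith
    _ = ∑ e ∈ F, ∑ i ∈ (Finset.range KK).filter (fun i => t (i + 1) ≤ wh e),
          (t (i + 1) - t i) := hswap.symm
    _ ≤ ∑ e ∈ F, wh e := Finset.sum_le_sum hedge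

end KTree
end Lower
section Final
open Classical Finset
variable {U N : Type*} [Fintype U] [DecidableEq U] [Fintype N] [DecidableEq N]

namespace KTree
variable {Es : Finset (U × U)} {wh : U × U → ℝ} {par : N → N} {root : N}
  {h : N → ℝ} {lf : U → N} (K : KTree Es wh par root h lf)
include K

lemma path_sum (r : U) :
    ∑ m ∈ Finset.univ.filter (fun m => m ≠ root ∧ r ∈ leavesBelow par lf m),
      (h (par m) - h m) = h root := by
  classical
  set c : ℕ → N := fun k => par^[k] (lf r) with hc
  have hex : ∃ k, c k = root := K.hwf (lf r)
  set d := Nat.find hex with hd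
  have hcd : c d = root := Nat.find_spec hex
  have hck : ∀ k, k < d → c k ≠ root := fun k hk => Nat.find_min hex hk
  have hstep : ∀ k, c (k + 1) = par (c k) := by
    intro k; rw [hc]; simp [Function.iterate_succ_apply']
  have hcompose : ∀ k₁ k₂, k₁ ≤ k₂ → c k₂ = par^[k₂ - k₁] (c k₁) := by
    intro k₁ k₂ hk
    rw [hc]
    simp only []
    rw [← Function.iterate_add_apply]
    congr 1
    omega
  have hlt : ∀ k₁ k₂, k₁ < k₂ → k₂ ≤ d → h (c k₁) < h (c k₂) := by
    intro k₁ k₂ h12 h2d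
    have h1 : c k₁ ≠ root := hck k₁ (by omega)
    have h2 : h (c k₁) < h (c (k₁ + 1)) := by
      rw [hstep]; exact K.hmono _ h1
    have h3 : c k₂ = par^[k₂ - (k₁ + 1)] (c (k₁ + 1)) := hcompose _ _ (by omega)
    have h4 : h (c (k₁ + 1)) ≤ h (c k₂) := by
      rw [h3]; exact K.h_le_iterate _ _
    linarith
  have hset : Finset.univ.filter (fun m => m ≠ root ∧ r ∈ leavesBelow par lf m)
      = (Finset.range d).image c := by
    ext m
    simp only [Finset.mem_filter, Finset.mem_univ, true_and, Finset.mem_image,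
      Finset.mem_range]
    constructor
    · rintro ⟨hmr, hrb⟩
      obtain ⟨k, hk⟩ := K.mem_below.1 hrb
      refine ⟨k, ?_, hk⟩
      by_contra hkd
      push_neg at hkd
      apply hmr
      have : c k = root := by
        rw [hcompose d k hkd, hcd, ]
        exact K.iterate_root _
      rw [← hk]
      exact this
    · rintro ⟨k, hkd, rfl⟩
      exact ⟨hck k hkd, K.mem_below.2 ⟨k, rfl⟩⟩
  have hinjc : ∀ x ∈ Finset.range d, ∀ y ∈ Finset.range d, c x = c y → x = y := by
    intro x hx y hy hxy
    rw [Finset.mem_range] at hx hy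
    by_contra hne
    rcases Nat.lt_or_ge x y with hlt' | hge
    · have := hlt x y hlt' (by omega)
      rw [hxy] at this; linarith
    · have hyx : y < x := by omega
      have := hlt y x hyx (by omega)
      rw [hxy] at this; linarith
  rw [hset, Finset.sum_image hinjc]
  have hterm : ∀ k ∈ Finset.range d, h (par (c k)) - h (c k) = h (c (k + 1)) - h (c k) := by
    intro k _; rw [hstep]
  rw [Finset.sum_congr rfl hterm, Finset.sum_range_sub (fun k => h (c k)) d, hcd]
  have : c 0 = lf r := rfl
  rw [this, K.hh0]
  ring

lemma opt_eq : OPT Es Finset.univ wh = subW par h root - h root := by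
  classical
  obtain ⟨F, hF1, hF2, hF3, hF4, hF5⟩ :=
    K.exists_spanning (leavesBelow par lf root).card root (le_refl _)
  rw [K.hrootall] at hF2 hF3 hF4
  have hmem : (subW par h root - h root)
      ∈ {t | ∃ F, IsSpanningTree Es Finset.univ F ∧ t = ∑ e ∈ F, wh e} :=
    ⟨F, ⟨hF1, hF2, hF3, hF4⟩, hF5.symm⟩
  apply le_antisymm
  · apply csInf_le
    · refine ⟨subW par h root - h root, ?_⟩
      rintro y ⟨F', hF', rfl⟩
      exact K.lower_bound hF'
    · exact hmem
  · apply le_csInf ⟨_, hmem⟩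
    rintro y ⟨F', hF', rfl⟩
    exact K.lower_bound hF'

end KTree
end Final

open Classical in
theorem stmt_19 {U N : Type*} [Fintype U] [DecidableEq U] [Fintype N] [DecidableEq N]
    (Es : Finset (U × U)) (wh : U × U → ℝ) (hwnn : ∀ e, 0 ≤ wh e) (r : U)
    (par : N → N) (root : N) (h : N → ℝ) (lf : U → N)
    -- `par` is the parent function of a finite rooted tree with root `root`:
    (hroot : par root = root)
    (hfix : ∀ n, par n = n → n = root)
    (hwf : ∀ n, IsDesc par n root)
    -- the leaves of the tree are exactly the vertices of `G`:
    (hinj : Function.Injective lf)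
    (hleaf1 : ∀ v : U, ∀ m, par m = lf v → m = lf v)
    (hleaf2 : ∀ n : N, (∀ m, par m = n → m = n) → ∃ v, lf v = n)
    -- leaves have height `0` and heights strictly increase towards the root:
    (hh0 : ∀ v, h (lf v) = 0)
    (hmono : ∀ m, m ≠ root → h m < h (par m))
    -- each node `n` corresponds to the connected component, at threshold `h n`,
    -- of the vertices below it, and this component is unchanged at any
    -- threshold below the parent's height (Kruskal merging structure):
    (hcomp : ∀ n : N, ∀ a ∈ leavesBelow par lf n,
      leavesBelow par lf n = compAt Es wh (h n) a)
    (hmax : ∀ m, m ≠ root → ∀ x, h m ≤ x → x < h (par m) →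
      ∀ a ∈ leavesBelow par lf m, leavesBelow par lf m = compAt Es wh x a)
    -- each internal node is created by a genuine merge at its height:
    (hnew : ∀ n : N, (∃ m, m ≠ n ∧ par m = n) → ∀ x, x < h n →
      ∃ a ∈ leavesBelow par lf n, leavesBelow par lf n ≠ compAt Es wh x a)
    -- the root corresponds to the whole (connected) graph:
    (hrootall : leavesBelow par lf root = Finset.univ) :
    ∑ m ∈ Finset.univ.filter (fun m : N => m ≠ root ∧ r ∉ leavesBelow par lf m),
        (h (par m) - h m)
      = OPT Es Finset.univ wh := by
  classical
  have K : KTree Es wh par root h lf :=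
    ⟨hwnn, hroot, hfix, hwf, hinj, hleaf1, hleaf2, hh0, hmono, hcomp, hmax, hnew, hrootall⟩
  rw [K.opt_eq]
  have hpath := K.path_sum r
  have hsplit := Finset.sum_filter_add_sum_filter_not
    (Finset.univ.filter (fun m : N => m ≠ root)) (fun m => r ∉ leavesBelow par lf m)
    (fun m => h (par m) - h m)
  rw [Finset.filter_filter, Finset.filter_filter] at hsplit
  have hnn : Finset.univ.filter (fun m : N => m ≠ root ∧ ¬ r ∉ leavesBelow par lf m)
      = Finset.univ.filter (fun m : N => m ≠ root ∧ r ∈ leavesBelow par lf m) := by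
    apply Finset.filter_congr
    intro m _
    simp [not_not]
  rw [hnn, hpath] at hsplit
  have hsub := K.subW_root
  linarith [hsplit]
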